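/- Inclusion–exclusion for the Gauss diagram pairing: let G₀ be a finite set (Gauss diagram) with a distinguished subset P of 'semi-virtual' chords, |P| = p. For a fixed finite set A with |A| = n₀ < p, we have ∑_{Q ⊆ P} (-1)^{p - |Q|} ⟨A, (G₀ \ P) ∪ Q⟩ = 0, where ⟨A, D⟩ = ∑_{D' ⊆ D} [A = D']. -/

import Mathlib

theorem stmt_9 {C : Type*} [DecidableEq C] (G₀ P A : Finset C)
    (hP : P ⊆ G₀) (p n₀ : ℕ) (hp : P.card = p) (hA : A.card = n₀)
    (hlt : n₀ < p) :
    ∑ Q ∈ P.powerset, (-1 : ℤ) ^ (p - Q.card) *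
      ∑ D' ∈ ((G₀ \ P) ∪ Q).powerset, (if A = D' then (1 : ℤ) else 0) = 0 := by
  have hinner : ∀ Q : Finset C,
      (∑ D' ∈ ((G₀ \ P) ∪ Q).powerset, (if A = D' then (1 : ℤ) else 0))
        = if A ⊆ (G₀ \ P) ∪ Q then 1 else 0 := by
    intro Q
    rw [Finset.sum_ite_eq]
    simp only [Finset.mem_powerset]
  by_cases hAG : A ⊆ G₀
  · set S := A ∩ P with hS
    have hcond : ∀ Q ∈ P.powerset, (A ⊆ (G₀ \ P) ∪ Q) ↔ S ⊆ Q := by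
      intro Q hQ
      rw [Finset.mem_powerset] at hQ
      constructor
      · intro h x hx
        rw [hS, Finset.mem_inter] at hx
        rcases Finset.mem_union.1 (h hx.1) with h' | h'
        · exact absurd (Finset.mem_sdiff.1 h').2 (fun c => c hx.2)
        · exact h'
      · intro h x hx
        by_cases hxP : x ∈ P
        · exact Finset.mem_union.2 (Or.inr (h (Finset.mem_inter.2 ⟨hx, hxP⟩)))
        · exact Finset.mem_union.2 (Or.inl (Finset.mem_sdiff.2 ⟨hAG hx, hxP⟩))
    calc ∑ Q ∈ P.powerset, (-1 : ℤ) ^ (p - Q.card) *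
          ∑ D' ∈ ((G₀ \ P) ∪ Q).powerset, (if A = D' then (1 : ℤ) else 0)
        = ∑ Q ∈ P.powerset.filter (fun Q => S ⊆ Q), (-1 : ℤ) ^ (p - Q.card) := by
          rw [Finset.sum_filter]
          refine Finset.sum_congr rfl fun Q hQ => ?_
          rw [hinner Q, if_congr (hcond Q hQ) rfl rfl]
          split <;> ring
      _ = ∑ R ∈ (P \ S).powerset, (-1 : ℤ) ^ (p - (S ∪ R).card) := by
          refine Finset.sum_nbij' (fun Q => Q \ S) (fun R => S ∪ R) ?_ ?_ ?_ ?_ ?_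
          · intro Q hQ
            rw [Finset.mem_filter, Finset.mem_powerset] at hQ
            exact Finset.mem_powerset.2 (Finset.sdiff_subset_sdiff hQ.1 le_rfl)
          · intro R hR
            rw [Finset.mem_powerset] at hR
            rw [Finset.mem_filter, Finset.mem_powerset]
            exact ⟨Finset.union_subset (Finset.inter_subset_right)
              (hR.trans Finset.sdiff_subset), Finset.subset_union_left⟩
          · intro Q hQ
            rw [Finset.mem_filter] at hQ
            show S ∪ (Q \ S) = Q
            rw [Finset.union_sdiff_of_subset hQ.2]
          · intro R hR
            rw [Finset.mem_powerset] at hR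
            show (S ∪ R) \ S = R
            rw [Finset.union_sdiff_cancel_left
              (Finset.disjoint_of_subset_right hR Finset.sdiff_disjoint.symm)]
          · intro Q hQ
            rw [Finset.mem_filter] at hQ
            rw [Finset.union_sdiff_of_subset hQ.2]
      _ = 0 := by
          have hSP : S ⊆ P := Finset.inter_subset_right
          have hdisj : ∀ R ∈ (P \ S).powerset, (S ∪ R).card = S.card + R.card := by
            intro R hR
            rw [Finset.mem_powerset] at hR
            exact Finset.card_union_of_disjoint
              (Finset.disjoint_of_subset_right hR Finset.sdiff_disjoint.symm)
          have hScard : S.card ≤ n₀ := hA ▸ Finset.card_le_card Finset.inter_subset_left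
          have ht : (P \ S).card = p - S.card := by rw [Finset.card_sdiff_of_subset hSP, hp]
          have htpos : 0 < (P \ S).card := by omega
          have hTne : P \ S ≠ ∅ := by
            intro h; rw [h] at htpos; simp at htpos
          calc ∑ R ∈ (P \ S).powerset, (-1 : ℤ) ^ (p - (S ∪ R).card)
              = ∑ R ∈ (P \ S).powerset, (-1 : ℤ) ^ (P \ S).card * (-1) ^ R.card := by
                refine Finset.sum_congr rfl fun R hR => ?_
                rw [hdisj R hR]
                have hRle : R.card ≤ (P \ S).card :=
                  Finset.card_le_card (Finset.mem_powerset.1 hR)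
                rw [← pow_add]
                have h2 : (P \ S).card + R.card = (p - (S.card + R.card)) + 2 * R.card := by
                  omega
                rw [h2, pow_add, pow_mul]
                norm_num
            _ = (-1 : ℤ) ^ (P \ S).card * ∑ R ∈ (P \ S).powerset, (-1 : ℤ) ^ R.card := by
                rw [Finset.mul_sum]
            _ = 0 := by
                rw [Finset.sum_powerset_neg_one_pow_card, if_neg hTne, mul_zero]
  · refine Finset.sum_eq_zero fun Q hQ => ?_
    rw [Finset.mem_powerset] at hQ
    rw [hinner Q, if_neg, mul_zero]
    intro h
    exact hAG (h.trans (Finset.union_subset Finset.sdiff_subset (hQ.trans hP)))
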